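/- Let d ≥ 3 and n ≥ 0, and let p be a real homogeneous polynomial of degree n in d variables. Then the polynomial Σ_{j=0}^{⌊n/2⌋} (1/(4^j j! (−n + 2 − d/2)_j)) ‖x‖^{2j} (Δ^j p)(x) is harmonic and homogeneous of degree n, and it differs from p by an element of ‖x‖² P_{n−2}^d; that is, it equals the orthogonal projection of p onto H_n^d in the decomposition P_n^d = H_n^d ⊕ ‖x‖² P_{n−2}^d. Here (a)_j = a(a+1)⋯(a+j−1) is the Pochhammer symbol, ‖x‖^{2j} denotes the polynomial (x_1²+⋯+x_d²)^j, and Δ^j is the j-th iterate of the Laplacian. -/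

import Mathlib

open MeasureTheory MvPolynomial Metric



/-- The polynomial Laplacian `Δ = ∂₁² + ⋯ + ∂_d²` as a linear map. -/
noncomputable def polyLaplacian (d : ℕ) : MvPolynomial (Fin d) ℝ →ₗ[ℝ] MvPolynomial (Fin d) ℝ :=
  ∑ i : Fin d, ((pderiv i).toLinearMap ∘ₗ (pderiv i).toLinearMap)

/-- A polynomial is harmonic if it is annihilated by the Laplacian. -/
def IsHarmonic {d : ℕ} (p : MvPolynomial (Fin d) ℝ) : Prop := polyLaplacian d p = 0

/-- The polynomial `‖x‖² = x₁² + ⋯ + x_d²`. -/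
noncomputable def normSqPoly (d : ℕ) : MvPolynomial (Fin d) ℝ := ∑ i : Fin d, X i ^ 2


/-- The explicit candidate for the orthogonal projection of `p` onto `H_n^d`:
`Σ_{j=0}^{⌊n/2⌋} (1/(4^j j! (−n+2−d/2)_j)) ‖x‖^{2j} Δ^j p`. -/
noncomputable def harmonicProjection (d n : ℕ) (p : MvPolynomial (Fin d) ℝ) :
    MvPolynomial (Fin d) ℝ :=
  ∑ j ∈ Finset.range (n / 2 + 1),
    MvPolynomial.C
      (1 / (4 ^ j * (j.factorial : ℝ) * (ascPochhammer ℝ j).eval (-(n : ℝ) + 2 - (d : ℝ) / 2))) *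
      (normSqPoly d ^ j * ((polyLaplacian d ^ j) p))

variable {d : ℕ}


lemma polyLaplacian_apply' (p : MvPolynomial (Fin d) ℝ) :
    (∑ i : Fin d, ((pderiv i).toLinearMap ∘ₗ (pderiv (R := ℝ) i).toLinearMap)) p
      = ∑ i : Fin d, pderiv i (pderiv i p) := by
  simp [LinearMap.sum_apply]

lemma Finsupp.degree_single' (i : Fin d) : (Finsupp.single i 1).degree = 1 := by
  rw [Finsupp.degree_apply, Finsupp.support_single_ne_zero _ one_ne_zero, Finset.sum_singleton,
    Finsupp.single_eq_same]

lemma degree_sub_single {u : Fin d →₀ ℕ} {i : Fin d} (h : u i ≠ 0) :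
    (u - Finsupp.single i 1).degree + 1 = u.degree := by
  have hle : Finsupp.single i 1 ≤ u := Finsupp.single_le_iff.mpr (Nat.one_le_iff_ne_zero.mpr h)
  have hu : (u - Finsupp.single i 1) + Finsupp.single i 1 = u := tsub_add_cancel_of_le hle
  calc (u - Finsupp.single i 1).degree + 1
      = (u - Finsupp.single i 1).degree + (Finsupp.single i 1).degree := by
        rw [Finsupp.degree_single']
    _ = u.degree := by
        rw [Finsupp.degree_eq_weight_one, ← map_add, hu]


lemma degree_of_mem_support {p : MvPolynomial (Fin d) ℝ} {n : ℕ} (hp : p.IsHomogeneous n)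
    {u : Fin d →₀ ℕ} (hu : u ∈ p.support) : u.degree = n := by
  by_contra h
  exact mem_support_iff.mp hu (hp.coeff_eq_zero h)

lemma pderiv_isHomogeneous {p : MvPolynomial (Fin d) ℝ} {n : ℕ} (hp : p.IsHomogeneous n)
    (i : Fin d) : (pderiv i p).IsHomogeneous (n - 1) := by
  have hrw : pderiv i p =
      ∑ u ∈ p.support, monomial (u - Finsupp.single i 1) (p.coeff u * u i) := by
    conv_lhs => rw [← p.support_sum_monomial_coeff]
    rw [map_sum]
    simp [pderiv_monomial]
  rw [hrw]
  apply IsHomogeneous.sum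
  intro u hu
  by_cases h : u i = 0
  · rw [h]
    simpa using isHomogeneous_zero (Fin d) ℝ (n - 1)
  · apply isHomogeneous_monomial
    have := degree_sub_single (u := u) (i := i) h
    have hdeg := degree_of_mem_support hp hu
    omega

lemma pderiv_of_isHomogeneous_zero {p : MvPolynomial (Fin d) ℝ} (hp : p.IsHomogeneous 0)
    (i : Fin d) : pderiv i p = 0 := by
  have hrw : pderiv i p =
      ∑ u ∈ p.support, monomial (u - Finsupp.single i 1) (p.coeff u * u i) := by
    conv_lhs => rw [← p.support_sum_monomial_coeff]
    rw [map_sum]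
    simp [pderiv_monomial]
  rw [hrw]
  apply Finset.sum_eq_zero
  intro u hu
  have hdeg := degree_of_mem_support hp hu
  have : u i = 0 := by
    have := Finsupp.degree_eq_zero_iff u |>.mp hdeg
    simp [this]
  simp [this]

lemma euler_identity {p : MvPolynomial (Fin d) ℝ} {n : ℕ} (hp : p.IsHomogeneous n) :
    ∑ i : Fin d, X i * pderiv i p = C (n : ℝ) * p := by
  conv_lhs => rw [← p.support_sum_monomial_coeff]
  conv_rhs => rw [← p.support_sum_monomial_coeff]
  simp only [map_sum, Finset.mul_sum]
  rw [Finset.sum_comm]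
  apply Finset.sum_congr rfl
  intro u hu
  have hdeg := degree_of_mem_support hp hu
  have key : ∀ i : Fin d, X i * pderiv i (monomial u (p.coeff u))
      = monomial u (p.coeff u * u i) := by
    intro i
    rw [pderiv_monomial, X, monomial_mul]
    by_cases h : u i = 0
    · simp [h]
    · have hle : Finsupp.single i 1 ≤ u :=
        Finsupp.single_le_iff.mpr (Nat.one_le_iff_ne_zero.mpr h)
      rw [add_tsub_cancel_of_le hle, one_mul]
  rw [Finset.sum_congr rfl (fun i _ => key i)]
  rw [C_mul_monomial]
  rw [← map_sum (monomial u), ← Finset.mul_sum]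
  congr 1
  · rw [mul_comm]
    congr 1
    rw [← hdeg, Finsupp.degree_apply]
    rw [Nat.cast_sum]
    rw [Finset.sum_subset (Finset.subset_univ u.support)]
    intro x _ hx
    simp [Finsupp.notMem_support_iff.mp hx]

lemma normSq_isHomogeneous : (∑ i : Fin d, X i ^ 2 : MvPolynomial (Fin d) ℝ).IsHomogeneous 2 := by
  apply IsHomogeneous.sum
  intro i _
  simpa using (isHomogeneous_X ℝ i).pow 2

lemma pderiv_normSq (i : Fin d) :
    pderiv i (∑ j : Fin d, X j ^ 2 : MvPolynomial (Fin d) ℝ) = 2 * X i := by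
  rw [map_sum]
  rw [Finset.sum_eq_single i]
  · rw [pderiv_pow]
    simp [pderiv_X_self]
  · intro j _ hj
    rw [pderiv_pow, pderiv_X_of_ne hj]
    ring
  · simp

/-- Key product rule: `Δ(‖x‖² q) = (2d + 4m) q + ‖x‖² Δq` for `q` homogeneous of degree `m`. -/
lemma lap_normSq_mul {q : MvPolynomial (Fin d) ℝ} {m : ℕ} (hq : q.IsHomogeneous m) :
    (∑ i : Fin d, ((pderiv i).toLinearMap ∘ₗ (pderiv (R := ℝ) i).toLinearMap))
        ((∑ i : Fin d, X i ^ 2) * q)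
      = C ((2 * d + 4 * m : ℕ) : ℝ) * q
        + (∑ i : Fin d, X i ^ 2) *
          (∑ i : Fin d, ((pderiv i).toLinearMap ∘ₗ (pderiv (R := ℝ) i).toLinearMap)) q := by
  rw [polyLaplacian_apply', polyLaplacian_apply']
  have step : ∀ i : Fin d, pderiv i (pderiv i ((∑ j : Fin d, X j ^ 2) * q))
      = 2 * q + 4 * (X i * pderiv i q) + (∑ j : Fin d, X j ^ 2) * pderiv i (pderiv i q) := by
    intro i
    have h2 : (pderiv i) (2 : MvPolynomial (Fin d) ℝ) = 0 := by
      rw [← map_ofNat (C : ℝ →+* MvPolynomial (Fin d) ℝ) 2, pderiv_C]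
    simp only [pderiv_mul, pderiv_normSq, map_add, h2, pderiv_X_self]
    ring
  rw [Finset.sum_congr rfl (fun i _ => step i)]
  rw [Finset.sum_add_distrib, Finset.sum_add_distrib]
  rw [← Finset.mul_sum, ← Finset.mul_sum, ← Finset.mul_sum]
  rw [euler_identity hq]
  rw [Finset.sum_const, Finset.card_univ, Fintype.card_fin]
  push_cast
  rw [map_add, map_mul, map_mul]
  simp only [C_eq_coe_nat, map_ofNat]
  push_cast
  ring

lemma polyLaplacian_apply (p : MvPolynomial (Fin d) ℝ) :
    polyLaplacian d p = ∑ i : Fin d, pderiv i (pderiv i p) := polyLaplacian_apply' p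

lemma normSqPoly_isHomogeneous : (normSqPoly d).IsHomogeneous 2 := normSq_isHomogeneous

lemma lap_normSq_mul' {q : MvPolynomial (Fin d) ℝ} {m : ℕ} (hq : q.IsHomogeneous m) :
    polyLaplacian d (normSqPoly d * q)
      = C ((2 * d + 4 * m : ℕ) : ℝ) * q + normSqPoly d * polyLaplacian d q :=
  lap_normSq_mul hq

lemma lap_normSq_pow (j : ℕ) {q : MvPolynomial (Fin d) ℝ} {m : ℕ} (hq : q.IsHomogeneous m) :
    polyLaplacian d (normSqPoly d ^ (j + 1) * q) =
      C ((2 * (j + 1) : ℝ) * (2 * (j + 1) + 2 * m + d - 2)) * (normSqPoly d ^ j * q)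
      + normSqPoly d ^ (j + 1) * polyLaplacian d q := by
  induction j with
  | zero =>
    rw [pow_one, pow_zero, one_mul, lap_normSq_mul' hq]
    congr 2
    push_cast
    ring
  | succ k ih =>
    have hq' : (normSqPoly d ^ (k + 1) * q).IsHomogeneous (2 * (k + 1) + m) :=
      (normSqPoly_isHomogeneous.pow (k + 1)).mul hq
    have e1 : normSqPoly d ^ (k + 2) * q = normSqPoly d * (normSqPoly d ^ (k + 1) * q) := by
      ring
    rw [e1, lap_normSq_mul' hq', ih]
    push_cast
    have key : (MvPolynomial.C ((2 * (d:ℝ) + 4 * (2 * ((k:ℝ) + 1) + (m:ℝ)))) : MvPolynomial (Fin d) ℝ)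
        + MvPolynomial.C (2 * ((k:ℝ) + 1) * (2 * ((k:ℝ) + 1) + 2 * (m:ℝ) + (d:ℝ) - 2))
        = MvPolynomial.C (2 * ((k:ℝ) + 1 + 1) * (2 * ((k:ℝ) + 1 + 1) + 2 * (m:ℝ) + (d:ℝ) - 2)) := by
      rw [← C_add]
      congr 1
      ring
    linear_combination (normSqPoly d ^ (k + 1) * q) * key

lemma lap_of_low_degree {q : MvPolynomial (Fin d) ℝ} {m : ℕ} (hq : q.IsHomogeneous m)
    (hm : m ≤ 1) : polyLaplacian d q = 0 := by
  rw [polyLaplacian_apply]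
  apply Finset.sum_eq_zero
  intro i _
  interval_cases m
  · rw [pderiv_of_isHomogeneous_zero hq i, map_zero]
  · have h0 : (pderiv i q).IsHomogeneous 0 := by simpa using pderiv_isHomogeneous hq i
    exact pderiv_of_isHomogeneous_zero h0 i

lemma lap_pow_isHomogeneous {p : MvPolynomial (Fin d) ℝ} {n : ℕ} (hp : p.IsHomogeneous n)
    (j : ℕ) (hj : 2 * j ≤ n) : ((polyLaplacian d ^ j) p).IsHomogeneous (n - 2 * j) := by
  induction j with
  | zero => simpa using hp
  | succ k ih =>
    have h1 := ih (by omega)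
    rw [pow_succ', Module.End.mul_apply, polyLaplacian_apply]
    apply IsHomogeneous.sum
    intro i _
    have h2 := pderiv_isHomogeneous (pderiv_isHomogeneous h1 i) i
    have e : n - 2 * k - 1 - 1 = n - 2 * (k + 1) := by omega
    exact e ▸ h2

lemma lap_pow_eq_zero {p : MvPolynomial (Fin d) ℝ} {n : ℕ} (hp : p.IsHomogeneous n)
    (j : ℕ) (hj : n < 2 * j) : (polyLaplacian d ^ j) p = 0 := by
  induction j with
  | zero => omega
  | succ k ih =>
    rw [pow_succ', Module.End.mul_apply]
    by_cases h : n < 2 * k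
    · rw [ih h, map_zero]
    · exact lap_of_low_degree (lap_pow_isHomogeneous hp k (by omega)) (by omega)

/-- The coefficient `c_j = 1/(4^j j! (a₀)_j)`. -/
noncomputable def projCoeff (d n : ℕ) (j : ℕ) : ℝ :=
  1 / (4 ^ j * (j.factorial : ℝ) * (ascPochhammer ℝ j).eval (-(n : ℝ) + 2 - (d : ℝ) / 2))

lemma projCoeff_zero (d n : ℕ) : projCoeff d n 0 = 1 := by
  simp [projCoeff]

lemma poch_succ_eval (a : ℝ) (k : ℕ) :
    (ascPochhammer ℝ (k + 1)).eval a = (ascPochhammer ℝ k).eval a * (a + k) := by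
  rw [ascPochhammer_succ_right]
  simp [Polynomial.eval_mul]

lemma factor_neg {d n k : ℕ} (hd : 3 ≤ d) (hk : 2 * (k + 1) ≤ n) :
    (-(n : ℝ) + 2 - (d : ℝ) / 2) + k < 0 := by
  have h1 : (2 * ((k : ℝ) + 1)) ≤ (n : ℝ) := by exact_mod_cast hk
  have h2 : (3 : ℝ) ≤ (d : ℝ) := by exact_mod_cast hd
  have h0 : (0 : ℝ) ≤ (n : ℝ) := Nat.cast_nonneg n
  linarith

lemma poch_ne_zero {d n : ℕ} (hd : 3 ≤ d) (j : ℕ) (hj : 2 * j ≤ n) :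
    (ascPochhammer ℝ j).eval (-(n : ℝ) + 2 - (d : ℝ) / 2) ≠ 0 := by
  induction j with
  | zero => simp
  | succ k ih =>
    rw [poch_succ_eval]
    exact mul_ne_zero (ih (by omega)) (ne_of_lt (factor_neg hd hj))

lemma projCoeff_rec {d n : ℕ} (hd : 3 ≤ d) (k : ℕ) (hk : 2 * (k + 1) ≤ n) :
    projCoeff d n (k + 1)
        * ((2 * ((k : ℝ) + 1)) * (2 * ((k : ℝ) + 1) + 2 * ((n - 2 * (k + 1) : ℕ) : ℝ) + d - 2))
      = - projCoeff d n k := by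
  have hcast : ((n - 2 * (k + 1) : ℕ) : ℝ) = (n : ℝ) - 2 * ((k : ℝ) + 1) := by
    push_cast [hk]
    ring
  rw [hcast]
  set a : ℝ := -(n : ℝ) + 2 - (d : ℝ) / 2 with ha
  have hPk : (ascPochhammer ℝ k).eval a ≠ 0 := poch_ne_zero hd k (by omega)
  have hfac : a + k < 0 := factor_neg hd hk
  have hfacne : a + (k : ℝ) ≠ 0 := ne_of_lt hfac
  rw [projCoeff, projCoeff, poch_succ_eval, Nat.factorial_succ]
  have h4 : (4 : ℝ) ^ (k + 1) = 4 * 4 ^ k := by ring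
  have hfct : (((k + 1) * k.factorial : ℕ) : ℝ) = ((k : ℝ) + 1) * (k.factorial : ℝ) := by
    push_cast; ring
  rw [h4, hfct]
  have hkf : (k.factorial : ℝ) ≠ 0 := Nat.cast_ne_zero.mpr k.factorial_ne_zero
  have h4k : (4 : ℝ) ^ k ≠ 0 := pow_ne_zero _ (by norm_num)
  have hk1 : ((k : ℝ) + 1) ≠ 0 := by positivity
  set x : ℝ := 4 ^ k * (k.factorial : ℝ) * (ascPochhammer ℝ k).eval a with hxdef
  set y : ℝ := 4 * ((k : ℝ) + 1) * (a + k) with hydef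
  have hx : x ≠ 0 := by
    apply mul_ne_zero (mul_ne_zero h4k hkf) hPk
  have hy : y ≠ 0 := by
    apply mul_ne_zero (mul_ne_zero (by norm_num) hk1) hfacne
  have hB : (2 * ((k : ℝ) + 1)) * (2 * ((k : ℝ) + 1) + 2 * ((n : ℝ) - 2 * ((k : ℝ) + 1)) + d - 2)
      = -y := by
    rw [hydef, ha]; ring
  have hden : 4 * (4 : ℝ) ^ k * (((k : ℝ) + 1) * (k.factorial : ℝ))
      * ((ascPochhammer ℝ k).eval a * (a + ↑k)) = x * y := by
    rw [hxdef, hydef]; ring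
  rw [hB, hden]
  field_simp

/-- The telescoping sequence for the harmonicity proof. -/
noncomputable def projG (d n : ℕ) (p : MvPolynomial (Fin d) ℝ) : ℕ → MvPolynomial (Fin d) ℝ
  | 0 => 0
  | j + 1 => C (projCoeff d n j) * (normSqPoly d ^ j * ((polyLaplacian d ^ (j + 1)) p))

lemma projG_zero (d n : ℕ) (p : MvPolynomial (Fin d) ℝ) : projG d n p 0 = 0 := rfl

lemma projG_succ (d n : ℕ) (p : MvPolynomial (Fin d) ℝ) (j : ℕ) :
    projG d n p (j + 1) = C (projCoeff d n j) * (normSqPoly d ^ j * ((polyLaplacian d ^ (j + 1)) p)) := rfl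

lemma lap_C_mul (a : ℝ) (z : MvPolynomial (Fin d) ℝ) :
    polyLaplacian d (C a * z) = C a * polyLaplacian d z := by
  rw [C_mul', LinearMap.map_smul, ← C_mul']

/-- The explicit formula gives the harmonic component of a homogeneous polynomial `p` of
degree `n` in the decomposition `P_n^d = H_n^d ⊕ ‖x‖² P_{n−2}^d`. -/
theorem harmonicProjection_spec (d n : ℕ) (hd : 3 ≤ d)
    (p : MvPolynomial (Fin d) ℝ) (hp : p.IsHomogeneous n) :
    IsHarmonic (harmonicProjection d n p) ∧
    (harmonicProjection d n p).IsHomogeneous n ∧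
    ∃ s : MvPolynomial (Fin d) ℝ, s.IsHomogeneous (n - 2) ∧
      p - harmonicProjection d n p = normSqPoly d * s := by
  have hproj : harmonicProjection d n p
      = ∑ j ∈ Finset.range (n / 2 + 1),
          C (projCoeff d n j) * (normSqPoly d ^ j * ((polyLaplacian d ^ j) p)) := rfl
  have hq : ∀ j, 2 * j ≤ n → (((polyLaplacian d ^ j)) p).IsHomogeneous (n - 2 * j) :=
    fun j hj => lap_pow_isHomogeneous hp j hj
  refine ⟨?_, ?_, ?_⟩
  · -- harmonicity
    show polyLaplacian d (harmonicProjection d n p) = 0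
    rw [hproj, map_sum]
    have hterm : ∀ j ∈ Finset.range (n / 2 + 1),
        polyLaplacian d (C (projCoeff d n j) * (normSqPoly d ^ j * ((polyLaplacian d ^ j) p)))
          = projG d n p (j + 1) - projG d n p j := by
      intro j hj
      rw [Finset.mem_range] at hj
      rw [lap_C_mul]
      cases j with
      | zero =>
        rw [projG_succ, projG_zero, sub_zero]
        simp [pow_one]
      | succ k =>
        have h2k : 2 * (k + 1) ≤ n := by omega
        have hqk : ((polyLaplacian d ^ (k + 1)) p).IsHomogeneous (n - 2 * (k + 1)) := hq _ h2k
        rw [lap_normSq_pow k hqk]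
        have hpow : polyLaplacian d ((polyLaplacian d ^ (k + 1)) p)
            = (polyLaplacian d ^ (k + 2)) p := by
          conv_rhs => rw [pow_succ', Module.End.mul_apply]
        rw [hpow, mul_add, ← mul_assoc, ← C_mul]
        have hrec := projCoeff_rec hd k h2k
        have hcoeff : projCoeff d n (k + 1)
            * ((2 * ((k : ℝ) + 1)) * (2 * ((k : ℝ) + 1) + 2 * ((n - 2 * (k + 1) : ℕ) : ℝ) + d - 2))
            = - projCoeff d n k := hrec
        rw [show (projCoeff d n (k + 1)
            * (2 * ((k : ℝ) + 1) * (2 * ((k : ℝ) + 1) + 2 * ((n - 2 * (k + 1) : ℕ) : ℝ) + ↑d - 2)))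
            = - projCoeff d n k from hcoeff]
        rw [projG_succ, projG_succ, map_neg]
        ring
    rw [Finset.sum_congr rfl hterm, Finset.sum_range_sub, projG_zero, sub_zero, projG_succ]
    have hzero : (polyLaplacian d ^ (n / 2 + 1)) p = 0 :=
      lap_pow_eq_zero hp _ (by omega)
    rw [hzero, mul_zero, mul_zero]
  · -- homogeneity
    rw [hproj]
    apply IsHomogeneous.sum
    intro j hj
    rw [Finset.mem_range] at hj
    have h2j : 2 * j ≤ n := by omega
    have hh := (normSqPoly_isHomogeneous.pow j).mul (hq j h2j)
    have e : 2 * j + (n - 2 * j) = n := by omega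
    exact (e ▸ hh).C_mul _
  · -- the difference
    refine ⟨-∑ i ∈ Finset.range (n / 2),
      C (projCoeff d n (i + 1)) * (normSqPoly d ^ i * ((polyLaplacian d ^ (i + 1)) p)), ?_, ?_⟩
    · apply IsHomogeneous.neg
      apply IsHomogeneous.sum
      intro i hi
      rw [Finset.mem_range] at hi
      have h2i : 2 * (i + 1) ≤ n := by omega
      have hh := (normSqPoly_isHomogeneous.pow i).mul (hq (i + 1) h2i)
      have e : 2 * i + (n - 2 * (i + 1)) = n - 2 := by omega
      exact (e ▸ hh).C_mul _
    · rw [hproj, Finset.sum_range_succ']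
      have hterm0 : C (projCoeff d n 0) * (normSqPoly d ^ 0 * ((polyLaplacian d ^ 0) p)) = p := by
        rw [projCoeff_zero, map_one, one_mul, pow_zero, one_mul, pow_zero, Module.End.one_apply]
      rw [hterm0, mul_neg, Finset.mul_sum]
      have : ∀ i ∈ Finset.range (n / 2),
          normSqPoly d * (C (projCoeff d n (i + 1)) * (normSqPoly d ^ i * ((polyLaplacian d ^ (i + 1)) p)))
          = C (projCoeff d n (i + 1)) * (normSqPoly d ^ (i + 1) * ((polyLaplacian d ^ (i + 1)) p)) := by
        intro i _
        ring
      rw [Finset.sum_congr rfl this]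
      ring
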